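/- Let A = U · fromBlocks T S 0 N · Uᴴ be a core-EP decomposition of the square complex matrix A with N^k = 0 for a natural number k ≥ 1, and let W = U · fromBlocks T⁻¹ (T⁻¹·T⁻¹·S) 0 0 · Uᴴ be its WG inverse. Then rank(W) = rank(A^k). -/

import Mathlib

open Matrix

lemma rank_fromBlocks_one_zero {m p : Type*}
    [Fintype m] [Fintype p] [DecidableEq m] [DecidableEq p] :
    (Matrix.fromBlocks (1 : Matrix m m ℂ) (0 : Matrix m p ℂ) 0 (0 : Matrix p p ℂ)).rank
      = Fintype.card m := by
  set E : Matrix (m ⊕ p) m ℂ := Matrix.fromRows 1 0 with hE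
  set F : Matrix m (m ⊕ p) ℂ := Matrix.fromCols 1 0 with hF
  have hEF : E * F = Matrix.fromBlocks (1 : Matrix m m ℂ) 0 0 (0 : Matrix p p ℂ) := by
    rw [hE, hF, Matrix.fromRows_mul_fromCols]; simp
  have hFE : F * E = (1 : Matrix m m ℂ) := by
    rw [hE, hF, Matrix.fromCols_mul_fromRows]; simp
  have key : F * (E * F * E) = 1 := by
    rw [show F * (E * F * E) = (F * E) * (F * E) by simp only [Matrix.mul_assoc], hFE, Matrix.one_mul]
  rw [← hEF]
  refine le_antisymm ((Matrix.rank_mul_le_right E F).trans (Matrix.rank_le_card_height F)) ?_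
  calc Fintype.card m = (F * (E * F * E)).rank := by rw [key, Matrix.rank_one]
    _ ≤ (E * F * E).rank := Matrix.rank_mul_le_right _ _
    _ ≤ (E * F).rank := Matrix.rank_mul_le_left _ _

lemma rank_fromBlocks_isUnit {m p : Type*}
    [Fintype m] [Fintype p] [DecidableEq m] [DecidableEq p]
    (B : Matrix m m ℂ) (C : Matrix m p ℂ) (hB : IsUnit B) :
    (Matrix.fromBlocks B C (0 : Matrix p m ℂ) (0 : Matrix p p ℂ)).rank = Fintype.card m := by
  have h1 : Matrix.fromBlocks B C (0 : Matrix p m ℂ) (0 : Matrix p p ℂ)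
      = Matrix.fromBlocks (1 : Matrix m m ℂ) 0 0 (0 : Matrix p p ℂ)
        * Matrix.fromBlocks B C 0 1 := by
    rw [Matrix.fromBlocks_multiply]; simp
  have hdet : IsUnit (Matrix.fromBlocks B C (0 : Matrix p m ℂ) (1 : Matrix p p ℂ)).det := by
    rw [Matrix.det_fromBlocks_zero₂₁]
    simpa using (Matrix.isUnit_iff_isUnit_det B).mp hB
  rw [h1, Matrix.rank_mul_eq_left_of_isUnit_det _ _ hdet, rank_fromBlocks_one_zero]

lemma pow_fromBlocks_triangular {m p : Type*}
    [Fintype m] [Fintype p] [DecidableEq m] [DecidableEq p]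
    (T : Matrix m m ℂ) (S : Matrix m p ℂ) (N : Matrix p p ℂ) (k : ℕ) :
    ∃ X : Matrix m p ℂ,
      (Matrix.fromBlocks T S 0 N) ^ k = Matrix.fromBlocks (T ^ k) X 0 (N ^ k) := by
  induction k with
  | zero => exact ⟨0, by simp [Matrix.fromBlocks_one]⟩
  | succ n ih =>
    obtain ⟨X, hX⟩ := ih
    refine ⟨T * X + S * N ^ n, ?_⟩
    rw [pow_succ', hX, Matrix.fromBlocks_multiply]
    simp [pow_succ']

/-- The WG inverse `W` of `A = U · fromBlocks T S 0 N · Uᴴ` (with `N^k = 0`, `k ≥ 1`)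
satisfies `rank(W) = rank(A^k)`. -/
theorem wg_inverse_rank {m p : Type*}
    [Fintype m] [Fintype p] [DecidableEq m] [DecidableEq p]
    (U : Matrix (m ⊕ p) (m ⊕ p) ℂ) (T : Matrix m m ℂ) (S : Matrix m p ℂ) (N : Matrix p p ℂ)
    (hU : U * Uᴴ = 1) (hU' : Uᴴ * U = 1) (hT : IsUnit T)
    (k : ℕ) (hk : 1 ≤ k) (hN : N ^ k = 0)
    (A W : Matrix (m ⊕ p) (m ⊕ p) ℂ)
    (hA : A = U * Matrix.fromBlocks T S 0 N * Uᴴ)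
    (hW : W = U * Matrix.fromBlocks T⁻¹ (T⁻¹ * T⁻¹ * S) 0 0 * Uᴴ) :
    W.rank = (A ^ k).rank := by
  have hUdet : IsUnit U.det := by
    have := congrArg Matrix.det hU
    rw [Matrix.det_mul, Matrix.det_one] at this
    exact IsUnit.of_mul_eq_one _ this
  have hUHdet : IsUnit (Uᴴ).det := by
    have := congrArg Matrix.det hU'
    rw [Matrix.det_mul, Matrix.det_one] at this
    exact IsUnit.of_mul_eq_one _ this
  obtain ⟨X, hX⟩ := pow_fromBlocks_triangular T S N k
  have hmulU : ∀ (P Q : Matrix (m ⊕ p) (m ⊕ p) ℂ),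
      (U * P * Uᴴ) * (U * Q * Uᴴ) = U * (P * Q) * Uᴴ := by
    intro P Q
    simp only [Matrix.mul_assoc]
    rw [← Matrix.mul_assoc Uᴴ U, hU', Matrix.one_mul]
  have hAk : A ^ k = U * Matrix.fromBlocks (T ^ k) X 0 0 * Uᴴ := by
    have hconj : ∀ n : ℕ, (U * Matrix.fromBlocks T S 0 N * Uᴴ) ^ n
        = U * (Matrix.fromBlocks T S 0 N) ^ n * Uᴴ := by
      intro n
      induction n with
      | zero => simp [hU]
      | succ j ih => rw [pow_succ, ih, hmulU, ← pow_succ]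
    rw [hA, hconj, hX, hN]
  have hrk : ∀ M : Matrix (m ⊕ p) (m ⊕ p) ℂ, (U * M * Uᴴ).rank = M.rank := by
    intro M
    rw [Matrix.rank_mul_eq_left_of_isUnit_det _ _ hUHdet,
      Matrix.rank_mul_eq_right_of_isUnit_det _ _ hUdet]
  have hTinv : IsUnit T⁻¹ := Matrix.isUnit_nonsing_inv_iff.mpr hT
  rw [hW, hAk, hrk, hrk, rank_fromBlocks_isUnit _ _ hTinv,
    rank_fromBlocks_isUnit _ _ (hT.pow k)]
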